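/- For every k ≥ 0, the Prüfer phase function θ ↦ Ψ_k(θ) is strictly increasing on ℝ, and it satisfies Ψ_k(θ + 2π) = Ψ_k(θ) + 2(k+1)π for all θ ∈ ℝ. -/

import Mathlib

open Complex

lemma absw {a : ℂ} (ha : ‖a‖ < 1) (ψ : ℝ) :
    ‖a * Complex.exp (Complex.I * ψ)‖ < 1 := by
  rw [norm_mul, mul_comm Complex.I, Complex.norm_exp_ofReal_mul_I, mul_one]; exact ha

lemma slit {a : ℂ} (ha : ‖a‖ < 1) (ψ : ℝ) :
    1 - a * Complex.exp (Complex.I * ψ) ∈ Complex.slitPlane := by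
  left
  have h := absw ha ψ
  have := Complex.re_le_norm (a * Complex.exp (Complex.I * ψ))
  simp only [Complex.sub_re, Complex.one_re]
  linarith

/-- key strict monotonicity of one step. -/
lemma key {a : ℂ} (ha : ‖a‖ < 1) :
    StrictMono (fun ψ : ℝ => ψ - 2 * (Complex.log (1 - a * Complex.exp (Complex.I * ψ))).im) := by
  apply strictMono_of_deriv_pos
  intro ψ
  set w : ℂ := a * Complex.exp (Complex.I * ψ) with hw
  have hx : (1 - w) ∈ Complex.slitPlane := slit ha ψ
  have hxne : (1 - w) ≠ 0 := Complex.slitPlane_ne_zero hx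
  -- derivative of inner function
  have h1 : HasDerivAt (fun ψ : ℝ => (1 : ℂ) - a * Complex.exp (Complex.I * ψ))
      (-(w * Complex.I)) ψ := by
    have he : HasDerivAt (fun ψ : ℝ => Complex.exp (Complex.I * ψ))
        (Complex.exp (Complex.I * ψ) * Complex.I) ψ := by
      have : HasDerivAt (fun z : ℂ => Complex.exp (Complex.I * z))
          (Complex.exp (Complex.I * ψ) * Complex.I) (ψ : ℂ) := by
        simpa [Function.comp_def] using ((Complex.hasDerivAt_exp (Complex.I * ψ)).comp (ψ : ℂ)
          ((hasDerivAt_id (ψ : ℂ)).const_mul Complex.I))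
      exact this.comp_ofReal
    have := (he.const_mul a).const_sub 1
    simpa [hw, mul_assoc, mul_comm, mul_left_comm] using this
  have h2 : HasDerivAt (fun ψ : ℝ => Complex.log (1 - a * Complex.exp (Complex.I * ψ)))
      (-(w * Complex.I) / (1 - w)) ψ := by
    have := h1.clog_real (by simpa [hw] using hx)
    simpa [hw] using this
  have h3 : HasDerivAt (fun ψ : ℝ =>
      (Complex.log (1 - a * Complex.exp (Complex.I * ψ))).im)
      ((-(w * Complex.I) / (1 - w)).im) ψ :=
    (Complex.imCLM.hasFDerivAt.comp_hasDerivAt ψ h2)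
  have h4 : HasDerivAt (fun ψ : ℝ =>
      ψ - 2 * (Complex.log (1 - a * Complex.exp (Complex.I * ψ))).im)
      (1 - 2 * (-(w * Complex.I) / (1 - w)).im) ψ :=
    (hasDerivAt_id ψ).sub ((h3.const_mul 2))
  rw [h4.deriv]
  -- positivity
  have hns : Complex.normSq w < 1 := by
    have := absw ha ψ
    rw [← Complex.sq_norm]
    nlinarith [norm_nonneg w]
  rw [Complex.normSq_apply] at hns
  have hnsx : (0:ℝ) < (1 - w.re) * (1 - w.re) + (0 - w.im) * (0 - w.im) := by nlinarith
  have him : (-(w * Complex.I) / (1 - w)).im =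
      -((w.re * (1 - w.re) + w.im * (0 - w.im)) /
        ((1 - w.re) * (1 - w.re) + (0 - w.im) * (0 - w.im))) := by
    rw [Complex.div_im]
    simp only [Complex.normSq_apply, Complex.sub_re, Complex.sub_im, Complex.one_re,
      Complex.one_im, Complex.neg_im, Complex.neg_re, Complex.mul_im, Complex.mul_re,
      Complex.I_re, Complex.I_im]
    ring
  clear_value w
  rw [him]
  have e : 1 - 2 * -((w.re * (1 - w.re) + w.im * (0 - w.im)) /
      ((1 - w.re) * (1 - w.re) + (0 - w.im) * (0 - w.im))) =
      (1 - (w.re * w.re + w.im * w.im)) /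
      ((1 - w.re) * (1 - w.re) + (0 - w.im) * (0 - w.im)) := by
    have hne : ((1 - w.re) * (1 - w.re) + (0 - w.im) * (0 - w.im)) ≠ 0 := ne_of_gt hnsx
    rw [mul_neg, sub_neg_eq_add, ← mul_div_assoc, add_div' _ _ _ hne,
      div_eq_div_iff hne hne]
    ring
  rw [e]
  exact div_pos (by linarith) hnsx

lemma exp_shift (x : ℝ) (n : ℕ) :
    Complex.exp (Complex.I * ((x + 2 * ((n : ℝ) + 1) * Real.pi : ℝ) : ℂ)) =
      Complex.exp (Complex.I * (x : ℝ)) := by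
  have h1 : (Complex.I * ((x + 2 * ((n : ℝ) + 1) * Real.pi : ℝ) : ℂ)) =
      Complex.I * (x : ℝ) + (((n : ℤ) + 1 : ℤ) : ℂ) * (2 * Real.pi * Complex.I) := by
    push_cast; ring
  rw [h1, Complex.exp_add, Complex.exp_int_mul_two_pi_mul_I, mul_one]


/-- The Prüfer phases: `Ψ_0(θ) = θ` and
`Ψ_{j+1}(θ) = Ψ_j(θ) + θ − 2 Im Log(1 − α_j e^{i Ψ_j(θ)})`, i.e.
`Ψ_j(θ) = (j+1)θ − 2 ∑_{i<j} Im Log(1 − α_i e^{i Ψ_i(θ)})`. -/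
noncomputable def pruferPhase (α : ℕ → ℂ) (θ : ℝ) : ℕ → ℝ
  | 0 => θ
  | j + 1 => pruferPhase α θ j + θ -
      2 * (Complex.log (1 - α j * Complex.exp (Complex.I * (pruferPhase α θ j : ℝ)))).im

/-- For every `k`, the Prüfer phase `θ ↦ Ψ_k(θ)` is strictly increasing on `ℝ`
and satisfies `Ψ_k(θ + 2π) = Ψ_k(θ) + 2(k+1)π`. -/
theorem pruferPhase_strictMono_and_periodic (α : ℕ → ℂ)
    (hα : ∀ j, ‖α j‖ < 1) (k : ℕ) :
    StrictMono (fun θ : ℝ => pruferPhase α θ k) ∧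
      ∀ θ : ℝ, pruferPhase α (θ + 2 * Real.pi) k
        = pruferPhase α θ k + 2 * (k + 1) * Real.pi := by
  induction k with
  | zero =>
    refine ⟨by simp only [pruferPhase]; exact fun _ _ h => h, fun θ => ?_⟩
    simp only [pruferPhase]; push_cast; ring
  | succ j ih =>
    obtain ⟨hm, hp⟩ := ih
    constructor
    · have heq : (fun θ : ℝ => pruferPhase α θ (j + 1)) =
        fun θ : ℝ => ((fun ψ : ℝ =>
          ψ - 2 * (Complex.log (1 - α j * Complex.exp (Complex.I * (ψ : ℝ)))).im)
            (pruferPhase α θ j)) + θ := by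
        funext θ; show pruferPhase α θ (j + 1) = _; simp only [pruferPhase]; ring
      rw [heq]
      exact ((key (hα j)).comp hm).add strictMono_id
    · intro θ
      show pruferPhase α (θ + 2 * Real.pi) j + (θ + 2 * Real.pi) -
          2 * (Complex.log (1 - α j * Complex.exp (Complex.I *
            ((pruferPhase α (θ + 2 * Real.pi) j : ℝ) : ℂ)))).im = _
      rw [hp θ, exp_shift]
      show pruferPhase α θ j + 2 * ((j : ℝ) + 1) * Real.pi + (θ + 2 * Real.pi) -
          2 * (Complex.log (1 - α j * Complex.exp (Complex.I *
            ((pruferPhase α θ j : ℝ) : ℂ)))).im = _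
      simp only [pruferPhase]
      push_cast
      ring
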